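/- Let φ : [0,1] → ℝ be bounded, convex, and differentiable on (0,1). Then the limits lim_{p→0} φ(p) and lim_{p→1} φ(p) exist and are finite, the limits lim_{p→0} φ'(p) and lim_{p→1} φ'(p) exist in the extended reals (possibly -∞ at 0 and +∞ at 1), and moreover lim_{p→0} p·φ'(p) = 0 and lim_{p→1} (1-p)·φ'(p) = 0. -/

import Mathlib

open Set Filter Topology

/-- A bounded convex function on `[0,1]`, differentiable on `(0,1)`, has
(finite) limits at the endpoints; its derivative has limits in the extended
reals at the endpoints (possibly `-∞` at `0`, `+∞` at `1`); and
`p·φ'(p) → 0` as `p → 0⁺` and `(1-p)·φ'(p) → 0` as `p → 1⁻`. -/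
theorem stmt_5 (φ φ' : ℝ → ℝ)
    (hbdd : ∃ M : ℝ, ∀ x ∈ Icc (0:ℝ) 1, |φ x| ≤ M)
    (hconv : ConvexOn ℝ (Icc (0:ℝ) 1) φ)
    (hderiv : ∀ x ∈ Ioo (0:ℝ) 1, HasDerivAt φ (φ' x) x) :
    (∃ a : ℝ, Tendsto φ (𝓝[>] (0:ℝ)) (𝓝 a)) ∧
    (∃ b : ℝ, Tendsto φ (𝓝[<] (1:ℝ)) (𝓝 b)) ∧
    (∃ L : EReal, L ≠ ⊤ ∧ Tendsto (fun p => (φ' p : EReal)) (𝓝[>] (0:ℝ)) (𝓝 L)) ∧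
    (∃ L : EReal, L ≠ ⊥ ∧ Tendsto (fun p => (φ' p : EReal)) (𝓝[<] (1:ℝ)) (𝓝 L)) ∧
    Tendsto (fun p => p * φ' p) (𝓝[>] (0:ℝ)) (𝓝 0) ∧
    Tendsto (fun p => (1 - p) * φ' p) (𝓝[<] (1:ℝ)) (𝓝 0) := by
  obtain ⟨M, hM⟩ := hbdd
  -- derivative ≤ slope ≤ derivative
  have hls : ∀ x ∈ Ioo (0:ℝ) 1, ∀ y ∈ Icc (0:ℝ) 1, x < y →
      φ' x ≤ (φ y - φ x) / (y - x) := by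
    intro x hx y hy hxy
    have h1 := hconv.le_slope_of_hasDerivAt (Ioo_subset_Icc_self hx) hy hxy (hderiv x hx)
    rwa [slope_def_field] at h1
  have hsl : ∀ x ∈ Icc (0:ℝ) 1, ∀ y ∈ Ioo (0:ℝ) 1, x < y →
      (φ y - φ x) / (y - x) ≤ φ' y := by
    intro x hx y hy hxy
    have h2 := hconv.slope_le_of_hasDerivAt hx (Ioo_subset_Icc_self hy) hxy (hderiv y hy)
    rwa [slope_def_field] at h2
  have hmono : ∀ x ∈ Ioo (0:ℝ) 1, ∀ y ∈ Ioo (0:ℝ) 1, x < y → φ' x ≤ φ' y := by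
    intro x hx y hy hxy
    exact (hls x hx y (Ioo_subset_Icc_self hy) hxy).trans
      (hsl x (Ioo_subset_Icc_self hx) y hy hxy)
  -- limit of φ at 0⁺
  have ha : ∃ a : ℝ, Tendsto φ (𝓝[>] (0:ℝ)) (𝓝 a) := by
    by_cases h : ∀ x ∈ Ioo (0:ℝ) (1/2), 0 ≤ φ' x
    · -- φ monotone on (0, 1/2)
      have hm : MonotoneOn φ (Ioo (0:ℝ) (1/2)) := by
        intro x hx y hy hxy
        rcases eq_or_lt_of_le hxy with rfl | hxy; · exact le_rfl
        · have hx1 : x ∈ Ioo (0:ℝ) 1 := ⟨hx.1, by linarith [hx.2]⟩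
          have := hls x hx1 y ⟨by linarith [hy.1], by linarith [hy.2]⟩ hxy
          have h0 := h x hx
          have h4 := (le_div_iff₀ (by linarith : (0:ℝ) < y - x)).mp (h0.trans this)
          linarith [h4]
      refine ⟨_, hm.tendsto_nhdsWithin_Ioo_right ⟨1/4, by norm_num⟩ ?_⟩
      refine ⟨-M, ?_⟩
      rintro z ⟨w, hw, rfl⟩
      have := hM w ⟨hw.1.le, by linarith [hw.2]⟩
      exact neg_le_of_abs_le this
    · push_neg at h
      obtain ⟨x₀, hx₀, hx₀neg⟩ := h
      have hm : AntitoneOn φ (Ioo (0:ℝ) x₀) := by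
        intro x hx y hy hxy
        rcases eq_or_lt_of_le hxy with rfl | hxy; · exact le_rfl
        · have hy1 : y ∈ Ioo (0:ℝ) 1 := ⟨hy.1, by linarith [hy.2, hx₀.2]⟩
          have h2 := hsl x ⟨hx.1.le, by linarith [hx.2, hx₀.2]⟩ y hy1 hxy
          have h3 : φ' y ≤ φ' x₀ := hmono y hy1 x₀ ⟨hx₀.1, by linarith [hx₀.2]⟩ hy.2
          have h4 := (div_le_iff₀ (by linarith : (0:ℝ) < y - x)).mp (by linarith : (φ y - φ x) / (y - x) ≤ 0)
          linarith [h4]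
      refine ⟨_, hm.tendsto_nhdsWithin_Ioo_right ⟨x₀/2, by constructor <;> linarith [hx₀.1]⟩ ?_⟩
      refine ⟨M, ?_⟩
      rintro z ⟨w, hw, rfl⟩
      exact le_of_abs_le (hM w ⟨hw.1.le, by linarith [hw.2, hx₀.2]⟩)
  -- limit of φ at 1⁻
  have hb : ∃ b : ℝ, Tendsto φ (𝓝[<] (1:ℝ)) (𝓝 b) := by
    by_cases h : ∀ x ∈ Ioo (1/2:ℝ) 1, φ' x ≤ 0
    · have hm : AntitoneOn φ (Ioo (1/2:ℝ) 1) := by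
        intro x hx y hy hxy
        rcases eq_or_lt_of_le hxy with rfl | hxy; · exact le_rfl
        · have hy1 : y ∈ Ioo (0:ℝ) 1 := ⟨by linarith [hy.1], hy.2⟩
          have h2 := hsl x ⟨by linarith [hx.1], hx.2.le⟩ y hy1 hxy
          have h0 : φ' y ≤ 0 := h y hy
          have h4 := (div_le_iff₀ (by linarith : (0:ℝ) < y - x)).mp (h2.trans h0)
          linarith [h4]
      refine ⟨_, hm.tendsto_nhdsWithin_Ioo_left ⟨3/4, by norm_num⟩ ?_⟩
      refine ⟨-M, ?_⟩
      rintro z ⟨w, hw, rfl⟩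
      exact neg_le_of_abs_le (hM w ⟨by linarith [hw.1], hw.2.le⟩)
    · push_neg at h
      obtain ⟨x₀, hx₀, hx₀pos⟩ := h
      have hm : MonotoneOn φ (Ioo x₀ 1) := by
        intro x hx y hy hxy
        rcases eq_or_lt_of_le hxy with rfl | hxy; · exact le_rfl
        · have hx1 : x ∈ Ioo (0:ℝ) 1 := ⟨by linarith [hx.1, hx₀.1], hx.2⟩
          have h1 := hls x hx1 y ⟨by linarith [hy.1, hx₀.1], hy.2.le⟩ hxy
          have h3 : φ' x₀ ≤ φ' x := hmono x₀ ⟨by linarith [hx₀.1], hx₀.2⟩ x hx1 hx.1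
          have h4 := (le_div_iff₀ (by linarith : (0:ℝ) < y - x)).mp (by linarith : (0:ℝ) ≤ (φ y - φ x) / (y - x))
          linarith [h4]
      refine ⟨_, hm.tendsto_nhdsWithin_Ioo_left ⟨(x₀+1)/2, by constructor <;> linarith [hx₀.2]⟩ ?_⟩
      refine ⟨M, ?_⟩
      rintro z ⟨w, hw, rfl⟩
      exact le_of_abs_le (hM w ⟨by linarith [hw.1, hx₀.1], hw.2.le⟩)
  obtain ⟨a, ha⟩ := ha
  obtain ⟨b, hb⟩ := hb
  -- EReal monotone
  have hmE : MonotoneOn (fun p => (φ' p : EReal)) (Ioo (0:ℝ) 1) := by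
    intro x hx y hy hxy
    rcases eq_or_lt_of_le hxy with rfl | hxy; · exact le_rfl
    · exact EReal.coe_le_coe_iff.mpr (hmono x hx y hy hxy)
  have hL0 : ∃ L : EReal, L ≠ ⊤ ∧ Tendsto (fun p => (φ' p : EReal)) (𝓝[>] (0:ℝ)) (𝓝 L) := by
    refine ⟨_, ?_, hmE.tendsto_nhdsWithin_Ioo_right ⟨1/2, by norm_num⟩ (OrderBot.bddBelow _)⟩
    have : sInf ((fun p => (φ' p : EReal)) '' Ioo (0:ℝ) 1) ≤ (φ' (1/2) : EReal) :=
      sInf_le (mem_image_of_mem _ (by norm_num))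
    exact fun hc => absurd (hc ▸ this) (by simp)
  have hL1 : ∃ L : EReal, L ≠ ⊥ ∧ Tendsto (fun p => (φ' p : EReal)) (𝓝[<] (1:ℝ)) (𝓝 L) := by
    refine ⟨_, ?_, hmE.tendsto_nhdsWithin_Ioo_left ⟨1/2, by norm_num⟩ (OrderTop.bddAbove _)⟩
    have : (φ' (1/2) : EReal) ≤ sSup ((fun p => (φ' p : EReal)) '' Ioo (0:ℝ) 1) :=
      le_sSup (mem_image_of_mem _ (by norm_num))
    exact fun hc => absurd (hc ▸ this) (by simp)
  -- p φ'(p) → 0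
  have hmap2 : Tendsto (fun p : ℝ => 2 * p) (𝓝[>] (0:ℝ)) (𝓝[>] (0:ℝ)) := by
    apply tendsto_nhdsWithin_of_tendsto_nhds_of_eventually_within
    · have : Tendsto (fun p : ℝ => 2 * p) (𝓝 (0:ℝ)) (𝓝 (2 * 0)) :=
        (continuous_const.mul continuous_id).tendsto 0
      simpa using this.mono_left nhdsWithin_le_nhds
    · filter_upwards [self_mem_nhdsWithin] with p (hp : (0:ℝ) < p)
      exact mul_pos two_pos hp
  have hmaph : Tendsto (fun p : ℝ => p / 2) (𝓝[>] (0:ℝ)) (𝓝[>] (0:ℝ)) := by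
    apply tendsto_nhdsWithin_of_tendsto_nhds_of_eventually_within
    · have : Tendsto (fun p : ℝ => p / 2) (𝓝 (0:ℝ)) (𝓝 ((0:ℝ) / 2)) :=
        (continuous_id.div_const 2).tendsto 0
      simpa using this.mono_left nhdsWithin_le_nhds
    · filter_upwards [self_mem_nhdsWithin] with p (hp : (0:ℝ) < p)
      exact half_pos hp
  have hz0 : Tendsto (fun p => p * φ' p) (𝓝[>] (0:ℝ)) (𝓝 0) := by
    have hlow : Tendsto (fun p : ℝ => 2 * (φ p - φ (p / 2))) (𝓝[>] (0:ℝ)) (𝓝 0) := by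
      have := (ha.sub (ha.comp hmaph)).const_mul (2:ℝ)
      simpa using this
    have hup : Tendsto (fun p : ℝ => φ (2 * p) - φ p) (𝓝[>] (0:ℝ)) (𝓝 0) := by
      have := (ha.comp hmap2).sub ha
      simpa using this
    refine tendsto_of_tendsto_of_tendsto_of_le_of_le' hlow hup ?_ ?_
    · filter_upwards [Ioo_mem_nhdsGT_of_mem (by norm_num : (0:ℝ) ∈ Ico (0:ℝ) (1/2))]
        with p hp
      have hp1 : p ∈ Ioo (0:ℝ) 1 := ⟨hp.1, by linarith [hp.2]⟩
      have h2 := hsl (p/2) ⟨by linarith [hp.1], by linarith [hp.2]⟩ p hp1 (by linarith [hp.1])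
      have h2' := (div_le_iff₀ (by linarith [hp.1] : (0:ℝ) < p - p/2)).mp h2
      nlinarith [h2']
    · filter_upwards [Ioo_mem_nhdsGT_of_mem (by norm_num : (0:ℝ) ∈ Ico (0:ℝ) (1/2))]
        with p hp
      have hp1 : p ∈ Ioo (0:ℝ) 1 := ⟨hp.1, by linarith [hp.2]⟩
      have h1 := hls p hp1 (2*p) ⟨by linarith [hp.1], by linarith [hp.2]⟩ (by linarith [hp.1])
      have h1' := (le_div_iff₀ (by linarith [hp.1] : (0:ℝ) < 2*p - p)).mp h1
      nlinarith [h1']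
  -- (1-p) φ'(p) → 0
  have hmapr : Tendsto (fun p : ℝ => 2 * p - 1) (𝓝[<] (1:ℝ)) (𝓝[<] (1:ℝ)) := by
    apply tendsto_nhdsWithin_of_tendsto_nhds_of_eventually_within
    · have : Tendsto (fun p : ℝ => 2 * p - 1) (𝓝 (1:ℝ)) (𝓝 (2 * 1 - 1)) :=
        ((continuous_const.mul continuous_id).sub continuous_const).tendsto 1
      have h' := this.mono_left (nhdsWithin_le_nhds (s := Iio (1:ℝ)))
      norm_num at h'
      exact h'
    · filter_upwards [self_mem_nhdsWithin] with p (hp : p < (1:ℝ))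
      simpa [Set.mem_Iio] using by linarith
  have hmapm : Tendsto (fun p : ℝ => (1 + p) / 2) (𝓝[<] (1:ℝ)) (𝓝[<] (1:ℝ)) := by
    apply tendsto_nhdsWithin_of_tendsto_nhds_of_eventually_within
    · have : Tendsto (fun p : ℝ => (1 + p) / 2) (𝓝 (1:ℝ)) (𝓝 ((1 + 1) / 2)) :=
        ((continuous_const.add continuous_id).div_const 2).tendsto 1
      simpa [norm_num] using this.mono_left nhdsWithin_le_nhds
    · filter_upwards [self_mem_nhdsWithin] with p (hp : p < (1:ℝ))
      simpa [Set.mem_Iio] using by linarith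
  have hz1 : Tendsto (fun p => (1 - p) * φ' p) (𝓝[<] (1:ℝ)) (𝓝 0) := by
    have hlow : Tendsto (fun p : ℝ => φ p - φ (2 * p - 1)) (𝓝[<] (1:ℝ)) (𝓝 0) := by
      have := hb.sub (hb.comp hmapr)
      simpa using this
    have hup : Tendsto (fun p : ℝ => 2 * (φ ((1 + p) / 2) - φ p)) (𝓝[<] (1:ℝ)) (𝓝 0) := by
      have := ((hb.comp hmapm).sub hb).const_mul (2:ℝ)
      simpa using this
    refine tendsto_of_tendsto_of_tendsto_of_le_of_le' hlow hup ?_ ?_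
    · filter_upwards [Ioo_mem_nhdsLT_of_mem (by norm_num : (1:ℝ) ∈ Ioc (1/2:ℝ) 1)]
        with p hp
      have hp1 : p ∈ Ioo (0:ℝ) 1 := ⟨by linarith [hp.1], hp.2⟩
      have h2 := hsl (2*p-1) ⟨by linarith [hp.1], by linarith [hp.2]⟩ p hp1 (by linarith [hp.2])
      have h2' := (div_le_iff₀ (by linarith [hp.2] : (0:ℝ) < p - (2*p-1))).mp h2
      nlinarith [h2']
    · filter_upwards [Ioo_mem_nhdsLT_of_mem (by norm_num : (1:ℝ) ∈ Ioc (1/2:ℝ) 1)]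
        with p hp
      have hp1 : p ∈ Ioo (0:ℝ) 1 := ⟨by linarith [hp.1], hp.2⟩
      have h1 := hls p hp1 ((1+p)/2) ⟨by linarith [hp.1], by linarith [hp.2]⟩ (by linarith [hp.2])
      have h1' := (le_div_iff₀ (by linarith [hp.2] : (0:ℝ) < (1+p)/2 - p)).mp h1
      nlinarith [h1']
  exact ⟨⟨a, ha⟩, ⟨b, hb⟩, hL0, hL1, hz0, hz1⟩
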